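/- Every pseudohyperbolic map g ∈ O(d+1,d) has determinant 1, i.e., lies in SO(d+1,d). -/

import Mathlib

open Module Filter Topology Matrix Polynomial

noncomputable section

/-- The stable subspace of a linear automorphism: vectors whose forward orbit tends to `0`.
For the maps considered here this is the sum of the generalized eigenspaces for eigenvalues
of modulus `< 1`. -/
def stableSet {n : ℕ} (g : (Fin n → ℝ) ≃ₗ[ℝ] (Fin n → ℝ)) : Submodule ℝ (Fin n → ℝ) where
  carrier := {x | Tendsto (fun k : ℕ => (g ^ k) x) atTop (nhds 0)}
  add_mem' := by
    intro a b ha hb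
    have ha' : Tendsto (fun k : ℕ => (g ^ k) a) atTop (nhds 0) := ha
    have hb' : Tendsto (fun k : ℕ => (g ^ k) b) atTop (nhds 0) := hb
    have := ha'.add hb'
    simpa using this
  zero_mem' := by
    simp only [Set.mem_setOf_eq, map_zero]
    exact tendsto_const_nhds
  smul_mem' := by
    intro c a ha
    have ha' : Tendsto (fun k : ℕ => (g ^ k) a) atTop (nhds 0) := ha
    have := ha'.const_smul c
    simpa using this

/-- The unstable subspace: the stable subspace of the inverse. -/
def unstableSet {n : ℕ} (g : (Fin n → ℝ) ≃ₗ[ℝ] (Fin n → ℝ)) : Submodule ℝ (Fin n → ℝ) :=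
  stableSet g.symm

/-- `g` is pseudohyperbolic for `Q`: it preserves `Q`, and the generalized eigenspace for
eigenvalues of modulus `1` is one-dimensional with eigenvalue `1`; spectrally, `1` is a
simple root of the characteristic polynomial and is its only complex root of modulus `1`. -/
def IsPseudohyperbolic {n : ℕ} (Q : QuadraticForm ℝ (Fin n → ℝ))
    (g : (Fin n → ℝ) ≃ₗ[ℝ] (Fin n → ℝ)) : Prop :=
  (∀ x, Q (g x) = Q x) ∧
  (((LinearMap.charpoly (g : (Fin n → ℝ) →ₗ[ℝ] (Fin n → ℝ))).map
      (algebraMap ℝ ℂ)).roots.count 1 = 1) ∧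
  (∀ z ∈ ((LinearMap.charpoly (g : (Fin n → ℝ) →ₗ[ℝ] (Fin n → ℝ))).map
      (algebraMap ℝ ℂ)).roots, ‖z‖ = 1 → z = 1)

private lemma eval_charpoly_aux {n : ℕ} (M : Matrix (Fin n) (Fin n) ℝ) (r : ℝ) :
    (Matrix.charpoly M).eval r = Matrix.det (r • (1 : Matrix (Fin n) (Fin n) ℝ) - M) := by
  rw [Matrix.charpoly, ← Polynomial.coe_evalRingHom, RingHom.map_det]
  congr 1
  ext i j
  by_cases h : i = j <;>
    simp [h, charmatrix_apply, Matrix.diagonal_apply, Matrix.one_apply, Matrix.smul_apply,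
      Matrix.sub_apply]

/-- Every pseudohyperbolic map `g ∈ O(d+1,d)` has determinant `1`, i.e. lies
in `SO(d+1,d)`. -/
theorem pseudohyperbolic_det_one (d : ℕ) (hd : 0 < d)
    (Q : QuadraticForm ℝ (Fin (2 * d + 1) → ℝ))
    (S T : Submodule ℝ (Fin (2 * d + 1) → ℝ))
    (hST : IsCompl S T)
    (hSdim : finrank ℝ S = d + 1) (hTdim : finrank ℝ T = d)
    (hSpos : ∀ x ∈ S, x ≠ 0 → 0 < Q x)
    (hTneg : ∀ x ∈ T, x ≠ 0 → Q x < 0)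
    (hQdec : ∀ x, Q x = Q ((S.linearProjOfIsCompl T hST x : Fin (2 * d + 1) → ℝ))
        + Q ((T.linearProjOfIsCompl S hST.symm x : Fin (2 * d + 1) → ℝ)))
    (g : (Fin (2 * d + 1) → ℝ) ≃ₗ[ℝ] (Fin (2 * d + 1) → ℝ))
    (hg : IsPseudohyperbolic Q g) :
    LinearMap.det (g : (Fin (2 * d + 1) → ℝ) →ₗ[ℝ] (Fin (2 * d + 1) → ℝ)) = 1 := by
  obtain ⟨hgQ, hgcount, hgroots⟩ := hg
  classical
  set f : (Fin (2*d+1) → ℝ) →ₗ[ℝ] (Fin (2*d+1) → ℝ)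
    := (g : (Fin (2*d+1) → ℝ) →ₗ[ℝ] (Fin (2*d+1) → ℝ)) with hf
  set P : LinearMap.BilinForm ℝ (Fin (2*d+1) → ℝ) := QuadraticMap.polarBilin Q with hP
  set M : Matrix (Fin (2*d+1)) (Fin (2*d+1)) ℝ := LinearMap.toMatrix' f with hM
  set BM : Matrix (Fin (2*d+1)) (Fin (2*d+1)) ℝ := LinearMap.toMatrix₂' ℝ P with hBM
  -- P as dot products
  have hPapply : ∀ x y, P x y = dotProduct x (BM.mulVec y) := by
    intro x y
    have h : P = Matrix.toLinearMap₂' ℝ BM := by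
      rw [hBM]; exact ((LinearMap.toMatrix₂' ℝ).symm_apply_apply P).symm
    rw [h, Matrix.toLinearMap₂'_apply']
  -- invariance of polar form
  have hinv : ∀ x y, P (f x) (f y) = P x y := by
    intro x y
    show QuadraticMap.polar Q (f x) (f y) = QuadraticMap.polar Q x y
    unfold QuadraticMap.polar
    have hfxy : f x + f y = f (x + y) := (map_add f x y).symm
    rw [hfxy]
    simp only [hf, LinearEquiv.coe_coe, hgQ]
  -- matrix identity Mᵀ * BM * M = BM
  have hmat : Mᵀ * BM * M = BM := by
    have h : P.compl₁₂ f f = P := by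
      ext x y
      simp [LinearMap.compl₁₂_apply, hinv]
    calc Mᵀ * BM * M = LinearMap.toMatrix₂' ℝ (P.compl₁₂ f f) := by
          rw [LinearMap.toMatrix₂'_compl₁₂]
      _ = BM := by rw [h]
  -- nondegeneracy: det BM ≠ 0
  have hdetB : BM.det ≠ 0 := by
    intro h0
    obtain ⟨v, hv0, hv⟩ := (Matrix.exists_mulVec_eq_zero_iff).2 h0
    set s : Fin (2*d+1) → ℝ := (S.linearProjOfIsCompl T hST v : Fin (2*d+1) → ℝ) with hs
    set t : Fin (2*d+1) → ℝ := (T.linearProjOfIsCompl S hST.symm v : Fin (2*d+1) → ℝ) with ht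
    have hsum : s + t = v := Submodule.projection_add_projection_eq_self hST v
    have hQs : 0 ≤ Q s := by
      rcases eq_or_ne s 0 with h | h
      · simp [h]
      · exact le_of_lt (hSpos _ (Submodule.coe_mem _) h)
    have hQt : Q t ≤ 0 := by
      rcases eq_or_ne t 0 with h | h
      · simp [h]
      · exact le_of_lt (hTneg _ (Submodule.coe_mem _) h)
    have hne : Q s ≠ 0 ∨ Q t ≠ 0 := by
      by_contra hc
      push_neg at hc
      rcases eq_or_ne s 0 with h | h
      · rcases eq_or_ne t 0 with h' | h'
        · apply hv0; rw [← hsum, h, h']; simp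
        · exact absurd hc.2 (ne_of_lt (hTneg _ (Submodule.coe_mem _) h'))
      · exact absurd hc.1 (ne_of_gt (hSpos _ (Submodule.coe_mem _) h))
    have hpos : 0 < P (s - t) v := by
      have e1 : P (s - t) v = P (s - t) (s + t) := by rw [hsum]
      have e2 : P (s - t) (s + t) = P s s - P t t := by
        have hsym : P s t = P t s := QuadraticMap.polar_comm Q s t
        simp only [map_sub, map_add, LinearMap.sub_apply, LinearMap.add_apply]
        rw [hsym]; ring
      have e3 : P s s = 2 * Q s := by
        show QuadraticMap.polar Q s s = 2 * Q s
        rw [QuadraticMap.polar_self]; rw [two_smul]; ring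
      have e4 : P t t = 2 * Q t := by
        show QuadraticMap.polar Q t t = 2 * Q t
        rw [QuadraticMap.polar_self]; rw [two_smul]; ring
      rw [e1, e2, e3, e4]
      rcases hne with h | h
      · have h' : 0 < Q s := lt_of_le_of_ne hQs (Ne.symm h)
        linarith
      · have h' : Q t < 0 := lt_of_le_of_ne hQt h
        linarith
    rw [hPapply, hv, dotProduct_zero] at hpos
    exact lt_irrefl 0 hpos
  -- key: det (1 + M) * (det M - 1) = 0
  have hkey : Matrix.det (1 + M) * (Matrix.det M - 1) = 0 := by
    have h1 : (1 + Mᵀ) * BM * M = BM * (M + 1) := by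
      have := hmat
      noncomm_ring [hmat]
    have h2 := congrArg Matrix.det h1
    rw [Matrix.det_mul, Matrix.det_mul, Matrix.det_mul] at h2
    have h3 : Matrix.det (1 + Mᵀ) = Matrix.det (1 + M) := by
      rw [show (1 + Mᵀ) = (1 + M)ᵀ by rw [Matrix.transpose_add, Matrix.transpose_one],
        Matrix.det_transpose]
    have h4 : Matrix.det (M + 1) = Matrix.det (1 + M) := by
      congr 1
      exact add_comm M 1
    rw [h3, h4] at h2
    -- h2 : det (1+M) * det BM * det M = det BM * det (1+M)
    have h5 : BM.det * (Matrix.det (1 + M) * (Matrix.det M - 1)) = 0 := by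
      linear_combination h2
    rcases mul_eq_zero.1 h5 with h | h
    · exact absurd h hdetB
    · exact h
  have hdetg : LinearMap.det f = Matrix.det M := by rw [hM, LinearMap.det_toMatrix']
  rcases mul_eq_zero.1 hkey with h1M | hdM
  · -- det(1+M) = 0 ⇒ -1 is a root of charpoly, contradiction
    exfalso
    have hroot : (Matrix.charpoly M).eval (-1 : ℝ) = 0 := by
      rw [eval_charpoly_aux]
      have h : ((-1 : ℝ) • (1 : Matrix (Fin (2*d+1)) (Fin (2*d+1)) ℝ) - M) = -(1 + M) := by
        ext i j
        simp only [Matrix.smul_apply, Matrix.sub_apply, Matrix.add_apply, Matrix.neg_apply,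
          neg_smul, one_smul]
        ring
      rw [h, Matrix.det_neg, h1M, mul_zero]
    have hcp : LinearMap.charpoly f = Matrix.charpoly M := by
      rw [← LinearMap.charpoly_toMatrix f (Pi.basisFun ℝ (Fin (2*d+1))),
        LinearMap.toMatrix_eq_toMatrix', hM]
    have hmem : (-1 : ℂ) ∈ ((LinearMap.charpoly f).map (algebraMap ℝ ℂ)).roots := by
      rw [Polynomial.mem_roots']
      refine ⟨((LinearMap.charpoly_monic f).map _).ne_zero, ?_⟩
      rw [Polynomial.IsRoot, show ((-1 : ℂ)) = algebraMap ℝ ℂ (-1) by simp,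
        Polynomial.eval_map, Polynomial.eval₂_at_apply, hcp, hroot, map_zero]
    have hcontra := hgroots (-1) hmem (by simp)
    norm_num at hcontra
  · have := sub_eq_zero.1 hdM
    rw [hdetg]; exact this
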